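/- Let f : ℝⁿ → ℝⁿ be a continuously differentiable vector field whose ODE ẋ = f(x) has a unique global flow φ, and assume φ is monotone. Let x* be a fixed point with basin of attraction B = B(x*). Let λ₁ < 0 and let s₁ : B → ℝ be a C¹ function that is increasing on B (x ⪯ y implies s₁(x) ≤ s₁(y)) and satisfies the eigenfunction equation ⟨∇s₁(x), f(x)⟩ = λ₁ s₁(x) for all x ∈ B. Assume that x* is the only point of B ∩ (x* + ℝ₊ⁿ) where s₁ vanishes, where x* + ℝ₊ⁿ = {x : x ⪰ x*}. Then: (1) the set X = (x* + ℝ₊ⁿ) ∩ B is forward invariant under φ; (2) s₁(x*) = 0 and s₁(x) > 0 for every x ∈ X \ {x*}; (3) the derivative of s₁ along trajectories, which equals λ₁ s₁(x), is strictly negative for every x ∈ X \ {x*}. Hence s₁ is a Lyapunov function for the system on X. -/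

import Mathlib

open Filter Topology

/-- Let `f` be a `C¹` vector field with unique global flow `φ`, assume `φ` is
monotone, let `x*` be a fixed point with basin of attraction `B`. Let `λ₁ < 0` and let
`s₁` be a `C¹` function on `B`, increasing on `B`, satisfying `⟨∇s₁ x, f x⟩ = λ₁ s₁ x` on
`B`, and vanishing on `B ∩ (x* + ℝ₊ⁿ)` only at `x*`. Then `X = (x* + ℝ₊ⁿ) ∩ B` is forward
invariant, `s₁ x* = 0` and `s₁ > 0` on `X \ {x*}`, and the derivative `λ₁ s₁` of `s₁` along
trajectories is strictly negative on `X \ {x*}`; hence `s₁` is a Lyapunov function on `X`. -/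
theorem eigenfunction_is_lyapunov_on_upper_cone {n : ℕ}
    (f : (Fin n → ℝ) → (Fin n → ℝ)) (hf : ContDiff ℝ 1 f)
    (φ : ℝ → (Fin n → ℝ) → (Fin n → ℝ))
    (h0 : ∀ x, φ 0 x = x)
    (hd : ∀ x, ∀ t ≥ (0 : ℝ), HasDerivAt (fun s => φ s x) (f (φ t x)) t)
    (huniq : ∀ (x : Fin n → ℝ) (ψ : ℝ → (Fin n → ℝ)), ψ 0 = x →
      (∀ t ≥ (0 : ℝ), HasDerivAt ψ (f (ψ t)) t) → ∀ t ≥ (0 : ℝ), ψ t = φ t x)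
    (hmono : ∀ t ≥ (0 : ℝ), ∀ x y : Fin n → ℝ, x ≤ y → φ t x ≤ φ t y)
    (xs : Fin n → ℝ) (hfix : ∀ t ≥ (0 : ℝ), φ t xs = xs)
    (B : Set (Fin n → ℝ))
    (hB : B = {x | Tendsto (fun t => φ t x) atTop (𝓝 xs)})
    (l1 : ℝ) (hl1 : l1 < 0)
    (s1 : (Fin n → ℝ) → ℝ)
    (hs1 : ContDiffOn ℝ 1 s1 B)
    (hinc : ∀ x ∈ B, ∀ y ∈ B, x ≤ y → s1 x ≤ s1 y)
    (heig : ∀ x ∈ B, fderiv ℝ s1 x (f x) = l1 * s1 x)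
    (hzero : ∀ x ∈ B, xs ≤ x → s1 x = 0 → x = xs) :
    (∀ x ∈ {y : Fin n → ℝ | xs ≤ y} ∩ B, ∀ t ≥ (0 : ℝ),
        φ t x ∈ {y : Fin n → ℝ | xs ≤ y} ∩ B) ∧
    (s1 xs = 0 ∧ ∀ x ∈ {y : Fin n → ℝ | xs ≤ y} ∩ B, x ≠ xs → 0 < s1 x) ∧
    (∀ x ∈ {y : Fin n → ℝ | xs ≤ y} ∩ B, x ≠ xs → l1 * s1 x < 0) := by
  -- xs is in the basin
  have hxsB : xs ∈ B := by
    rw [hB]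
    refine Tendsto.congr' ?_ tendsto_const_nhds
    filter_upwards [eventually_ge_atTop (0 : ℝ)] with t ht
    exact (hfix t ht).symm
  -- f xs = 0
  have hfxs : f xs = 0 := by
    have h1 : HasDerivAt (fun s => φ s xs) (f (φ 1 xs)) 1 := hd xs 1 (by norm_num)
    have heq : (fun s => φ s xs) =ᶠ[𝓝 (1 : ℝ)] (fun _ => xs) := by
      filter_upwards [Ioi_mem_nhds (show (0:ℝ) < 1 by norm_num)] with s hs
      exact hfix s (le_of_lt hs)
    have h2 : HasDerivAt (fun _ : ℝ => xs) (f (φ 1 xs)) 1 := h1.congr_of_eventuallyEq heq.symm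
    have h3 := h2.unique (hasDerivAt_const 1 xs)
    rw [hfix 1 (by norm_num)] at h3
    exact h3
  -- s1 xs = 0
  have hs1xs : s1 xs = 0 := by
    have := heig xs hxsB
    rw [hfxs, map_zero] at this
    have := this.symm
    exact (mul_eq_zero.mp this).resolve_left (ne_of_lt hl1)
  -- forward invariance
  have hinv : ∀ x ∈ {y : Fin n → ℝ | xs ≤ y} ∩ B, ∀ t ≥ (0 : ℝ),
      φ t x ∈ {y : Fin n → ℝ | xs ≤ y} ∩ B := by
    rintro x ⟨hx1, hx2⟩ t ht
    constructor
    · have := hmono t ht xs x hx1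
      rwa [hfix t ht] at this
    · -- semigroup: φ s (φ t x) = φ (s + t) x for s ≥ 0
      have hsg : ∀ s ≥ (0:ℝ), φ (s + t) x = φ s (φ t x) := by
        intro s hs
        refine huniq (φ t x) (fun u => φ (u + t) x) (by simp) ?_ s hs
        intro u hu
        have h1 : HasDerivAt (fun v => φ v x) (f (φ (u + t) x)) (id u + t) :=
          hd x (u + t) (by linarith)
        have h2 := h1.scomp u ((hasDerivAt_id u).add_const t)
        simpa [Function.comp_def] using h2
      rw [hB]
      have hx2' : Tendsto (fun s => φ s x) atTop (𝓝 xs) := by rwa [hB] at hx2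
      have h3 : Tendsto (fun s : ℝ => φ (s + t) x) atTop (𝓝 xs) :=
        hx2'.comp (tendsto_atTop_add_const_right _ t tendsto_id)
      refine Tendsto.congr' ?_ h3
      filter_upwards [eventually_ge_atTop (0 : ℝ)] with s hs
      exact hsg s hs
  -- positivity
  have hpos : ∀ x ∈ {y : Fin n → ℝ | xs ≤ y} ∩ B, x ≠ xs → 0 < s1 x := by
    rintro x ⟨hx1, hx2⟩ hne
    have hge : 0 ≤ s1 x := by
      have := hinc xs hxsB x hx2 hx1
      rwa [hs1xs] at this
    rcases lt_or_eq_of_le hge with h | h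
    · exact h
    · exact absurd (hzero x hx2 hx1 h.symm) hne
  exact ⟨hinv, ⟨hs1xs, hpos⟩, fun x hx hne =>
    mul_neg_of_neg_of_pos hl1 (hpos x hx hne)⟩
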